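/- Let 𝒟 ⊂ ℝ^d and 𝒳 ⊂ ℝ^e be compact sets, where 𝒟 has finite Lebesgue measure m(𝒟). Let h : 𝒟 → ℝ be a bounded continuous prior probability density (h ≥ 0 and ∫_𝒟 h = 1), and let g : 𝒳 × 𝒟 → ℝ be a bounded continuous nonnegative likelihood; write g(x|θ). Assume the Bayes factor q(x) = ∫_𝒟 h(u) g(x|u) du is strictly positive for every x ∈ 𝒳, and define the posterior f(θ|x) = g(x|θ) h(θ) / q(x). Then for every ε > 0 there exist δ_h > 0 and δ_g > 0 such that: for all measurable functions H : 𝒟 → ℝ and G : 𝒳 × 𝒟 → ℝ with sup_θ |H(θ) − h(θ)| < δ_h and sup_{x,θ} |G(x|θ) − g(x|θ)| < δ_g, the approximate Bayes factor Q(x) = ∫_𝒟 H(u) G(x|u) du is nonzero for all x ∈ 𝒳 and the approximate posterior F(θ|x) = H(θ) G(x|θ) / Q(x) satisfies |F(θ|x) − f(θ|x)| < ε for all x ∈ 𝒳 and all θ ∈ 𝒟. (Bayesian Approximation Theorem.) -/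

import Mathlib

open MeasureTheory

set_option maxHeartbeats 1000000

/-- **Bayesian Approximation Theorem.**
On compact sets `D` (parameters) and `X` (data), uniform (sup-norm) approximators
`H` of the bounded continuous prior `h` and `G` of the bounded continuous likelihood
`g` yield, via Bayes theorem, a uniform approximator
`F(θ|x) = H(θ)G(x|θ)/∫_D H G` of the posterior `f(θ|x) = h(θ)g(x|θ)/∫_D h g`. -/
theorem bayesian_approximation_theorem
    (d e : ℕ)
    (D : Set (Fin d → ℝ)) (X : Set (Fin e → ℝ))
    (hDc : IsCompact D) (hXc : IsCompact X) (hDm : MeasurableSet D)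
    (h : (Fin d → ℝ) → ℝ) (g : (Fin e → ℝ) → (Fin d → ℝ) → ℝ)
    (hh_cont : ContinuousOn h D)
    (hh_bdd : ∃ C, ∀ θ ∈ D, |h θ| ≤ C)
    (hh_nonneg : ∀ θ ∈ D, 0 ≤ h θ)
    (hh_prob : (∫ θ in D, h θ) = 1)
    (hg_cont : ContinuousOn (fun q : (Fin e → ℝ) × (Fin d → ℝ) => g q.1 q.2) (X ×ˢ D))
    (hg_bdd : ∃ C, ∀ x ∈ X, ∀ θ ∈ D, |g x θ| ≤ C)
    (hg_nonneg : ∀ x ∈ X, ∀ θ ∈ D, 0 ≤ g x θ)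
    (hq_pos : ∀ x ∈ X, 0 < ∫ u in D, h u * g x u) :
    ∀ ε > 0, ∃ δh > 0, ∃ δg > 0,
      ∀ (H : (Fin d → ℝ) → ℝ) (G : (Fin e → ℝ) → (Fin d → ℝ) → ℝ),
        Measurable H →
        Measurable (fun q : (Fin e → ℝ) × (Fin d → ℝ) => G q.1 q.2) →
        (∀ θ ∈ D, |H θ - h θ| < δh) →
        (∀ x ∈ X, ∀ θ ∈ D, |G x θ - g x θ| < δg) →
        (∀ x ∈ X, (∫ u in D, H u * G x u) ≠ 0) ∧
        (∀ x ∈ X, ∀ θ ∈ D,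
          |H θ * G x θ / (∫ u in D, H u * G x u) -
            h θ * g x θ / (∫ u in D, h u * g x u)| < ε) := by
  intro ε hε
  -- trivial case: no data
  rcases Set.eq_empty_or_nonempty X with hXe | hXne
  · refine ⟨1, one_pos, 1, one_pos, fun H G _ _ _ _ => ?_⟩
    constructor
    · intro x hx; exact absurd hx (by simp [hXe])
    · intro x hx; exact absurd hx (by simp [hXe])
  obtain ⟨Ch, hCh⟩ := hh_bdd
  obtain ⟨Cg, hCg⟩ := hg_bdd
  set C : ℝ := max 1 (max Ch Cg) with hCdef
  have hC1 : (1 : ℝ) ≤ C := le_max_left _ _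
  have hC0 : (0 : ℝ) < C := lt_of_lt_of_le one_pos hC1
  have hhC : ∀ θ ∈ D, |h θ| ≤ C := fun θ hθ =>
    (hCh θ hθ).trans ((le_max_left _ _).trans (le_max_right _ _))
  have hgC : ∀ x ∈ X, ∀ θ ∈ D, |g x θ| ≤ C := fun x hx θ hθ =>
    (hCg x hx θ hθ).trans ((le_max_right _ _).trans (le_max_right _ _))
  have hDfin : volume D < ⊤ := hDc.measure_lt_top
  haveI : IsFiniteMeasure (volume.restrict D) :=
    ⟨by rwa [Measure.restrict_apply_univ]⟩
  set M : ℝ := (volume D).toReal with hMdef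
  have hM0 : 0 ≤ M := ENNReal.toReal_nonneg
  -- continuity of each g x on D and of x ↦ g x u on X
  have hgx_cont : ∀ x ∈ X, ContinuousOn (fun u => g x u) D := by
    intro x hx
    exact hg_cont.comp ((continuous_const.prodMk continuous_id).continuousOn)
      (fun u hu => ⟨hx, hu⟩)
  have hgu_cont : ∀ u ∈ D, ContinuousOn (fun x => g x u) X := by
    intro u hu
    exact hg_cont.comp ((continuous_id.prodMk continuous_const).continuousOn)
      (fun x hx => ⟨hx, hu⟩)
  -- the Bayes factor is continuous on X
  set q : (Fin e → ℝ) → ℝ := fun x => ∫ u in D, h u * g x u with hqdef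
  have hq_cont : ContinuousOn q X := by
    apply continuousOn_of_dominated (bound := fun _ => C * C)
    · intro x hx
      exact ((hh_cont.mul (hgx_cont x hx)).aestronglyMeasurable hDm)
    · intro x hx
      filter_upwards [ae_restrict_mem hDm] with u hu
      have := hhC u hu
      have := hgC x hx u hu
      calc ‖h u * g x u‖ = |h u| * |g x u| := by rw [Real.norm_eq_abs, abs_mul]
        _ ≤ C * C := mul_le_mul (hhC u hu) (hgC x hx u hu) (abs_nonneg _) hC0.le
    · exact integrable_const _
    · filter_upwards [ae_restrict_mem hDm] with u hu
      exact continuousOn_const.mul (hgu_cont u hu)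
  obtain ⟨x₀, hx₀X, hx₀min⟩ := hXc.exists_isMinOn hXne hq_cont
  set q₀ : ℝ := q x₀ with hq₀def
  have hq₀pos : 0 < q₀ := hq_pos x₀ hx₀X
  have hqge : ∀ x ∈ X, q₀ ≤ q x := fun x hx => hx₀min hx
  -- choose δ
  set η₀ : ℝ := min (q₀ / (4 * (M + 1))) (min (ε * q₀ / 8) (ε * q₀ ^ 2 / (8 * C ^ 2 * (M + 1)))) with hη₀def
  have hη₀pos : 0 < η₀ := by
    refine lt_min (by positivity) (lt_min (by positivity) (by positivity))
  set δ : ℝ := min 1 (η₀ / (2 * C + 1)) with hδdef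
  have hδpos : 0 < δ := lt_min one_pos (by positivity)
  have hδ1 : δ ≤ 1 := min_le_left _ _
  refine ⟨δ, hδpos, δ, hδpos, ?_⟩
  intro H G hHm hGm hHa hGa
  set η : ℝ := δ * (2 * C + 1) with hηdef
  have hηpos : 0 < η := by positivity
  have hηle : η ≤ η₀ := by
    have h1 : δ ≤ η₀ / (2 * C + 1) := min_le_right _ _
    calc η = δ * (2 * C + 1) := rfl
      _ ≤ (η₀ / (2 * C + 1)) * (2 * C + 1) := by
          apply mul_le_mul_of_nonneg_right h1; positivity
      _ = η₀ := by field_simp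
  have hη1 : η ≤ q₀ / (4 * (M + 1)) := hηle.trans (min_le_left _ _)
  have hη2 : η ≤ ε * q₀ / 8 := hηle.trans ((min_le_right _ _).trans (min_le_left _ _))
  have hη3 : η ≤ ε * q₀ ^ 2 / (8 * C ^ 2 * (M + 1)) :=
    hηle.trans ((min_le_right _ _).trans (min_le_right _ _))
  -- pointwise bounds on H and G
  have hHC : ∀ u ∈ D, |H u| ≤ C + 1 := by
    intro u hu
    have := hHa u hu
    have := hhC u hu
    calc |H u| = |(H u - h u) + h u| := by ring_nf
      _ ≤ |H u - h u| + |h u| := abs_add_le _ _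
      _ ≤ C + 1 := by nlinarith [hδ1]
  have hGC : ∀ x ∈ X, ∀ u ∈ D, |G x u| ≤ C + 1 := by
    intro x hx u hu
    have := hGa x hx u hu
    have := hgC x hx u hu
    calc |G x u| = |(G x u - g x u) + g x u| := by ring_nf
      _ ≤ |G x u - g x u| + |g x u| := abs_add_le _ _
      _ ≤ C + 1 := by nlinarith [hδ1]
  -- pointwise estimate on the product
  have hprod : ∀ x ∈ X, ∀ u ∈ D, |H u * G x u - h u * g x u| ≤ η := by
    intro x hx u hu
    have e1 : H u * G x u - h u * g x u
        = (H u - h u) * G x u + h u * (G x u - g x u) := by ring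
    have hHh := hHa u hu
    have hGg := hGa x hx u hu
    have hGb := hGC x hx u hu
    have hhb := hhC u hu
    calc |H u * G x u - h u * g x u|
        ≤ |(H u - h u) * G x u| + |h u * (G x u - g x u)| := by rw [e1]; exact abs_add_le _ _
      _ = |H u - h u| * |G x u| + |h u| * |G x u - g x u| := by rw [abs_mul, abs_mul]
      _ ≤ δ * (C + 1) + C * δ := by
          have h1 : |H u - h u| * |G x u| ≤ δ * (C + 1) :=
            mul_le_mul hHh.le hGb (abs_nonneg _) hδpos.le
          have h2 : |h u| * |G x u - g x u| ≤ C * δ :=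
            mul_le_mul hhb hGg.le (abs_nonneg _) hC0.le
          linarith
      _ = η := by rw [hηdef]; ring
  -- integrability
  have hG_meas : ∀ x, Measurable (fun u => G x u) := by
    intro x
    exact hGm.comp (measurable_const.prodMk measurable_id)
  have hHG_int : ∀ x ∈ X, IntegrableOn (fun u => H u * G x u) D := by
    intro x hx
    refine ⟨((hHm.mul (hG_meas x)).aestronglyMeasurable), ?_⟩
    apply HasFiniteIntegral.of_bounded (C := (C + 1) * (C + 1))
    filter_upwards [ae_restrict_mem hDm] with u hu
    calc ‖H u * G x u‖ = |H u| * |G x u| := by rw [Real.norm_eq_abs, abs_mul]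
      _ ≤ (C + 1) * (C + 1) :=
        mul_le_mul (hHC u hu) (hGC x hx u hu) (abs_nonneg _) (by positivity)
  have hhg_int : ∀ x ∈ X, IntegrableOn (fun u => h u * g x u) D := by
    intro x hx
    exact (hh_cont.mul (hgx_cont x hx)).integrableOn_compact hDc
  -- integral estimate
  set Q : (Fin e → ℝ) → ℝ := fun x => ∫ u in D, H u * G x u with hQdef
  have hQq : ∀ x ∈ X, |Q x - q x| ≤ η * M := by
    intro x hx
    have e1 : Q x - q x = ∫ u in D, (H u * G x u - h u * g x u) := by
      rw [integral_sub (hHG_int x hx) (hhg_int x hx)]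
    rw [e1, ← Real.norm_eq_abs]
    apply norm_setIntegral_le_of_norm_le_const hDfin
    · intro u hu
      rw [Real.norm_eq_abs]
      exact hprod x hx u hu
  have hQpos : ∀ x ∈ X, q₀ / 2 < Q x := by
    intro x hx
    have h1 := hQq x hx
    have h2 := hqge x hx
    have h3 : η * M ≤ q₀ / 4 := by
      have : η * (M + 1) ≤ q₀ / 4 := by
        calc η * (M + 1) ≤ (q₀ / (4 * (M + 1))) * (M + 1) := by
              apply mul_le_mul_of_nonneg_right hη1; positivity
          _ = q₀ / 4 := by field_simp
      nlinarith
    have := abs_le.mp h1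
    linarith
  refine ⟨fun x hx => ne_of_gt (lt_trans (by positivity) (hQpos x hx)), ?_⟩
  intro x hx θ hθ
  have hQx := hQpos x hx
  have hqx : 0 < q x := hq_pos x hx
  have hQx0 : 0 < Q x := lt_trans (by positivity) hQx
  have hA : |H θ * G x θ - h θ * g x θ| ≤ η := hprod x hx θ hθ
  have hB : |h θ * g x θ| ≤ C * C := by
    rw [abs_mul]
    exact mul_le_mul (hhC θ hθ) (hgC x hx θ hθ) (abs_nonneg _) hC0.le
  have hQqx : |Q x - q x| ≤ η * M := hQq x hx
  clear_value C M η₀ δ η q₀ Q q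
  have key : H θ * G x θ / Q x - h θ * g x θ / q x
      = ((H θ * G x θ - h θ * g x θ) * q x + (h θ * g x θ) * (q x - Q x)) / (Q x * q x) := by
    field_simp
    ring
  rw [show (∫ u in D, H u * G x u) = Q x from by rw [hQdef],
    show (∫ u in D, h u * g x u) = q x from by rw [hqdef]]
  rw [key, abs_div, abs_of_pos (mul_pos hQx0 hqx), div_lt_iff₀ (mul_pos hQx0 hqx)]
  have hbound : |(H θ * G x θ - h θ * g x θ) * q x + (h θ * g x θ) * (q x - Q x)|
      ≤ η * q x + (C * C) * (η * M) := by
    calc |(H θ * G x θ - h θ * g x θ) * q x + (h θ * g x θ) * (q x - Q x)|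
        ≤ |(H θ * G x θ - h θ * g x θ) * q x| + |(h θ * g x θ) * (q x - Q x)| := abs_add_le _ _
      _ = |H θ * G x θ - h θ * g x θ| * |q x| + |h θ * g x θ| * |q x - Q x| := by
          rw [abs_mul, abs_mul]
      _ ≤ η * q x + (C * C) * (η * M) := by
          have h1 : |q x| = q x := abs_of_pos hqx
          have h2 : |q x - Q x| = |Q x - q x| := abs_sub_comm _ _
          rw [h1, h2]
          have h3 : |H θ * G x θ - h θ * g x θ| * q x ≤ η * q x :=
            mul_le_mul_of_nonneg_right hA hqx.le
          have h4 : |h θ * g x θ| * |Q x - q x| ≤ (C * C) * (η * M) :=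
            mul_le_mul hB hQqx (abs_nonneg _) (by positivity)
          linarith
  refine lt_of_le_of_lt hbound ?_
  -- final arithmetic: η * q x + C² η M < ε * (Q x * q x)
  have hqxq₀ : q₀ ≤ q x := hqge x hx
  have hterm1 : η * q x ≤ (ε * q₀ / 8) * q x := mul_le_mul_of_nonneg_right hη2 hqx.le
  have hterm2 : (C * C) * (η * M) ≤ ε * q₀ ^ 2 / 8 := by
    have h1 : η * (M + 1) ≤ ε * q₀ ^ 2 / (8 * C ^ 2) := by
      calc η * (M + 1) ≤ (ε * q₀ ^ 2 / (8 * C ^ 2 * (M + 1))) * (M + 1) := by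
            apply mul_le_mul_of_nonneg_right hη3; positivity
        _ = ε * q₀ ^ 2 / (8 * C ^ 2) := by field_simp
    have h2 : η * M ≤ ε * q₀ ^ 2 / (8 * C ^ 2) := by nlinarith [hηpos]
    have h3 : (C * C) * (η * M) ≤ (C * C) * (ε * q₀ ^ 2 / (8 * C ^ 2)) :=
      mul_le_mul_of_nonneg_left h2 (by positivity)
    calc (C * C) * (η * M) ≤ (C * C) * (ε * q₀ ^ 2 / (8 * C ^ 2)) := h3
      _ = ε * q₀ ^ 2 / 8 := by field_simp
  have hεQq : ε * (q₀ / 2) * q x < ε * (Q x * q x) := by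
    have : (q₀ / 2) * q x < Q x * q x := mul_lt_mul_of_pos_right hQx hqx
    nlinarith
  have h5 : ε * q₀ * q₀ ≤ ε * q₀ * q x := mul_le_mul_of_nonneg_left hqxq₀ (by positivity)
  have h6 : 0 < ε * q₀ * q₀ := by positivity
  nlinarith [hterm1, hterm2, hεQq, h5, h6]
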